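/- Let C be a real n×n matrix all of whose complex eigenvalues λ satisfy |λ| < 1, and let S be a real n×n matrix. If P₁ and P₂ are real n×n matrices both satisfying the discrete-time Lyapunov equation P = S + Cᵀ P C, then P₁ = P₂; that is, the solution of the Lyapunov equation is unique when C is stable. -/

import Mathlib

open Matrix
open scoped ENNReal NNReal

attribute [local instance] Matrix.linftyOpNormedRing Matrix.linftyOpNormedAlgebra

section Aux

variable {n : ℕ}

lemma spectrum_transpose_eq (A : Matrix (Fin n) (Fin n) ℂ) :
    spectrum ℂ Aᵀ = spectrum ℂ A := by
  ext z
  rw [spectrum.mem_iff, spectrum.mem_iff]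
  have h : algebraMap ℂ (Matrix (Fin n) (Fin n) ℂ) z - Aᵀ
      = (algebraMap ℂ (Matrix (Fin n) (Fin n) ℂ) z - A)ᵀ := by
    rw [transpose_sub, Matrix.algebraMap_eq_diagonal, diagonal_transpose]
  rw [h, Matrix.isUnit_transpose]

lemma eigen_of_mem_spectrum {A : Matrix (Fin n) (Fin n) ℂ} {z : ℂ}
    (hz : z ∈ spectrum ℂ A) : ∃ v : Fin n → ℂ, v ≠ 0 ∧ A.mulVec v = z • v := by
  rw [← AlgEquiv.spectrum_eq (Matrix.toLinAlgEquiv' (R := ℂ) (n := Fin n)),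
    ← Module.End.hasEigenvalue_iff_mem_spectrum] at hz
  obtain ⟨v, hv⟩ := hz.exists_hasEigenvector
  refine ⟨v, hv.right, ?_⟩
  have := hv.apply_eq_smul
  rwa [Matrix.toLinAlgEquiv'_apply] at this

end Aux

/-- When `C` is stable (all complex eigenvalues have modulus `< 1`), the solution
of the discrete-time Lyapunov equation `P = S + Cᵀ P C` is unique. -/
theorem lyapunov_solution_unique {n : ℕ} (hn : 0 < n)
    (C S : Matrix (Fin n) (Fin n) ℝ)
    (hstable : ∀ (lam : ℂ) (v : Fin n → ℂ), v ≠ 0 →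
      (C.map (fun x : ℝ => (x : ℂ))).mulVec v = lam • v → ‖lam‖ < 1)
    (P₁ P₂ : Matrix (Fin n) (Fin n) ℝ)
    (h1 : P₁ = S + Cᵀ * P₁ * C) (h2 : P₂ = S + Cᵀ * P₂ * C) :
    P₁ = P₂ := by
  haveI : Nonempty (Fin n) := ⟨⟨0, hn⟩⟩
  -- the difference satisfies the homogeneous equation
  have hQ : P₁ - P₂ = Cᵀ * (P₁ - P₂) * C := by
    calc P₁ - P₂ = (S + Cᵀ * P₁ * C) - (S + Cᵀ * P₂ * C) := by rw [← h1, ← h2]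
    _ = Cᵀ * (P₁ - P₂) * C := by noncomm_ring
  -- complexify
  set f : ℝ →+* ℂ := Complex.ofRealHom with hf
  set A : Matrix (Fin n) (Fin n) ℂ := C.map f with hA
  set Q : Matrix (Fin n) (Fin n) ℂ := (P₁ - P₂).map f with hQdef
  have hQC : Q = Aᵀ * Q * A := by
    rw [hQdef, hA]
    conv_lhs => rw [hQ]
    rw [Matrix.map_mul, Matrix.map_mul, Matrix.transpose_map]
  -- iterate
  have hQk : ∀ k : ℕ, Q = (Aᵀ) ^ k * Q * A ^ k := by
    intro k
    induction k with
    | zero => simp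
    | succ k ih =>
      calc Q = Aᵀ * Q * A := hQC
      _ = Aᵀ * ((Aᵀ) ^ k * Q * A ^ k) * A := by rw [← ih]
      _ = (Aᵀ) ^ (k + 1) * Q * A ^ (k + 1) := by
          rw [pow_succ' (Aᵀ) k, pow_succ A k]
          noncomm_ring
  -- spectral radius bounds
  have hspecA : ∀ z ∈ spectrum ℂ A, ‖z‖₊ < 1 := by
    intro z hz
    obtain ⟨v, hv0, hv⟩ := eigen_of_mem_spectrum hz
    have := hstable z v hv0 (by exact hv)
    simpa [← NNReal.coe_lt_one] using this
  have hspecAT : ∀ z ∈ spectrum ℂ Aᵀ, ‖z‖₊ < 1 := by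
    rw [spectrum_transpose_eq]; exact hspecA
  haveI : CompleteSpace (Matrix (Fin n) (Fin n) ℂ) :=
    FiniteDimensional.complete ℂ _
  have hradA : spectralRadius ℂ A < 1 := by
    simpa using spectrum.spectralRadius_lt_of_forall_lt A hspecA
  have hradAT : spectralRadius ℂ Aᵀ < 1 := by
    simpa using spectrum.spectralRadius_lt_of_forall_lt Aᵀ hspecAT
  -- get a power with small norm
  have key : ∀ (B : Matrix (Fin n) (Fin n) ℂ), spectralRadius ℂ B < 1 →
      ∀ᶠ k : ℕ in Filter.atTop, ‖B ^ k‖ < 1 := by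
    intro B hB
    have := spectrum.pow_nnnorm_pow_one_div_tendsto_nhds_spectralRadius B
    have hev := this.eventually_lt_const hB
    filter_upwards [hev, Filter.eventually_gt_atTop 0] with k hk hk0
    by_contra hge
    push_neg at hge
    have h1le : (1 : ℝ≥0∞) ≤ (‖B ^ k‖₊ : ℝ≥0∞) := by
      rw [← ENNReal.coe_one, ENNReal.coe_le_coe]
      rwa [← norm_toNNReal, Real.one_le_toNNReal]
    have : (1 : ℝ≥0∞) ≤ (‖B ^ k‖₊ : ℝ≥0∞) ^ (1 / (k : ℝ)) := by
      calc (1 : ℝ≥0∞) = 1 ^ (1 / (k : ℝ)) := (ENNReal.one_rpow _).symm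
      _ ≤ (‖B ^ k‖₊ : ℝ≥0∞) ^ (1 / (k : ℝ)) :=
          ENNReal.rpow_le_rpow h1le (by positivity)
    exact absurd hk (not_lt.mpr this)
  obtain ⟨k, hkA, hkAT⟩ := ((key A hradA).and (key Aᵀ hradAT)).exists
  -- conclude Q = 0
  have hQnorm : ‖Q‖ ≤ ‖Aᵀ ^ k‖ * ‖Q‖ * ‖A ^ k‖ := by
    calc ‖Q‖ = ‖Aᵀ ^ k * Q * A ^ k‖ := by rw [← hQk k]
    _ ≤ ‖Aᵀ ^ k * Q‖ * ‖A ^ k‖ := norm_mul_le _ _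
    _ ≤ ‖Aᵀ ^ k‖ * ‖Q‖ * ‖A ^ k‖ :=
        mul_le_mul_of_nonneg_right (norm_mul_le _ _) (norm_nonneg _)
  have hQ0 : ‖Q‖ = 0 := by
    have h0 : 0 ≤ ‖Q‖ := norm_nonneg _
    have h0A : 0 ≤ ‖A ^ k‖ := norm_nonneg _
    have h0AT : 0 ≤ ‖Aᵀ ^ k‖ := norm_nonneg _
    have hab : ‖Aᵀ ^ k‖ * ‖A ^ k‖ < 1 := by nlinarith
    nlinarith [hQnorm, hab]
  have hQzero : Q = 0 := norm_eq_zero.mp hQ0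
  have : P₁ - P₂ = 0 := by
    ext i j
    have := congrFun (congrFun hQzero i) j
    simp only [hQdef, hf, Matrix.map_apply] at this
    have h := (Complex.ofReal_eq_zero).mp this
    simpa using h
  exact sub_eq_zero.mp this
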